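/- Let a_i > 0 (i = 1,…,n), b_j > 0 (j = 1,…,m), with 0 ≤ α_1 < … < α_n < β_1 < … < β_m < 1 and α_i ≠ β_j for all i, j. Then for every ξ ∈ ℝ \ {0} and every s = r e^{iφ} with r > 0 and 0 < φ < π/2, Im(s² + ξ² · (Σ_j b_j s^{β_j})/(Σ_i a_i s^{α_i})) > 0, hence s² + ξ² (Σ_j b_j s^{β_j})/(Σ_i a_i s^{α_i}) ≠ 0. -/

import Mathlib

open Complex Finset

lemma cpow_polar_aux {r : ℝ} (hr : 0 < r) {φ : ℝ} (hφ1 : -Real.pi < φ) (hφ2 : φ ≤ Real.pi)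
    (c : ℝ) :
    ((r : ℂ) * Complex.exp (Complex.I * φ)) ^ (c : ℂ) =
      ((r ^ c : ℝ) : ℂ) * Complex.exp (Complex.I * (c * φ)) := by
  have hs : (r : ℂ) * Complex.exp (Complex.I * φ) ≠ 0 :=
    mul_ne_zero (by exact_mod_cast hr.ne') (Complex.exp_ne_zero _)
  have habs : ‖(r : ℂ) * Complex.exp (Complex.I * φ)‖ = r := by
    rw [norm_mul, Complex.norm_real, Real.norm_of_nonneg hr.le, mul_comm Complex.I,
      Complex.norm_exp_ofReal_mul_I, mul_one]
  have harg : Complex.arg ((r : ℂ) * Complex.exp (Complex.I * φ)) = φ := by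
    rw [mul_comm Complex.I, Complex.exp_mul_I]
    exact Complex.arg_mul_cos_add_sin_mul_I hr ⟨hφ1, hφ2⟩
  have hlog : Complex.log ((r : ℂ) * Complex.exp (Complex.I * φ)) =
      (Real.log r : ℂ) + (φ : ℂ) * Complex.I := by
    rw [Complex.log, habs, harg]
  rw [Complex.cpow_def_of_ne_zero hs, hlog, Real.rpow_def_of_pos hr, Complex.ofReal_exp,
    ← Complex.exp_add]
  congr 1
  push_cast
  ring

theorem stmt3 (n m : ℕ) (a α : Fin (n + 1) → ℝ) (b β : Fin (m + 1) → ℝ)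
    (ha : ∀ i, 0 < a i) (hb : ∀ j, 0 < b j)
    (hα0 : ∀ i, 0 ≤ α i) (hmα : StrictMono α) (hmβ : StrictMono β)
    (hαβ : α (Fin.last n) < β 0) (hβ1 : β (Fin.last m) < 1)
    (ξ : ℝ) (hξ : ξ ≠ 0) (r φ : ℝ) (hr : 0 < r)
    (hφ : φ ∈ Set.Ioo 0 (Real.pi / 2))
    (s : ℂ) (hs : s = (r : ℂ) * Complex.exp (Complex.I * φ)) :
    0 < (s ^ 2 + (ξ ^ 2 : ℂ) * (∑ j, (b j : ℂ) * s ^ (β j : ℂ))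
          / (∑ i, (a i : ℂ) * s ^ (α i : ℂ))).im ∧
    s ^ 2 + (ξ ^ 2 : ℂ) * (∑ j, (b j : ℂ) * s ^ (β j : ℂ))
          / (∑ i, (a i : ℂ) * s ^ (α i : ℂ)) ≠ 0 := by
  obtain ⟨hφ0, hφhalf⟩ := hφ
  have hπ := Real.pi_pos
  have hφπ : φ ≤ Real.pi := by linarith
  have hφπ' : -Real.pi < φ := by linarith
  -- exponent bounds
  have hαβ' : ∀ i j, α i < β j := fun i j =>
    ((hmα.monotone (Fin.le_last i)).trans_lt hαβ).trans_le (hmβ.monotone (Fin.zero_le j))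
  have hβ' : ∀ j, β j < 1 := fun j => (hmβ.monotone (Fin.le_last j)).trans_lt hβ1
  have hα1 : ∀ i, α i < 1 := fun i => (hαβ' i 0).trans (hβ' 0)
  -- power formula
  have hpow : ∀ c : ℝ, s ^ (c : ℂ) =
      ((r ^ c : ℝ) : ℂ) * Complex.exp (Complex.I * (c * φ)) := by
    intro c; rw [hs, cpow_polar_aux hr hφπ' hφπ c]
  -- re/im of terms
  have hterm : ∀ (x c : ℝ), ((x : ℂ) * s ^ (c : ℂ)) =
      ((x * r ^ c * Real.cos (c * φ) : ℝ) : ℂ) +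
        ((x * r ^ c * Real.sin (c * φ) : ℝ) : ℂ) * Complex.I := by
    intro x c
    rw [hpow c, mul_comm Complex.I, Complex.exp_mul_I]
    push_cast
    ring
  have hterm_re : ∀ (x c : ℝ), ((x : ℂ) * s ^ (c : ℂ)).re = x * r ^ c * Real.cos (c * φ) := by
    intro x c
    rw [hterm]
    simp only [Complex.add_re, Complex.ofReal_re, Complex.mul_re, Complex.I_re,
      Complex.ofReal_im, Complex.I_im]
    ring
  have hterm_im : ∀ (x c : ℝ), ((x : ℂ) * s ^ (c : ℂ)).im = x * r ^ c * Real.sin (c * φ) := by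
    intro x c
    rw [hterm]
    simp only [Complex.add_im, Complex.ofReal_im, Complex.mul_im, Complex.I_im,
      Complex.ofReal_re, Complex.I_re]
    ring
  set D : ℂ := ∑ i, (a i : ℂ) * s ^ (α i : ℂ) with hD
  set N : ℂ := ∑ j, (b j : ℂ) * s ^ (β j : ℂ) with hN
  have hDre : D.re = ∑ i, a i * r ^ α i * Real.cos (α i * φ) := by
    rw [hD, Complex.re_sum]; exact Finset.sum_congr rfl fun i _ => hterm_re _ _
  have hDim : D.im = ∑ i, a i * r ^ α i * Real.sin (α i * φ) := by
    rw [hD, Complex.im_sum]; exact Finset.sum_congr rfl fun i _ => hterm_im _ _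
  have hNre : N.re = ∑ j, b j * r ^ β j * Real.cos (β j * φ) := by
    rw [hN, Complex.re_sum]; exact Finset.sum_congr rfl fun j _ => hterm_re _ _
  have hNim : N.im = ∑ j, b j * r ^ β j * Real.sin (β j * φ) := by
    rw [hN, Complex.im_sum]; exact Finset.sum_congr rfl fun j _ => hterm_im _ _
  -- D.re > 0
  have hcos : ∀ i, 0 < Real.cos (α i * φ) := by
    intro i
    apply Real.cos_pos_of_mem_Ioo
    constructor
    · nlinarith [hα0 i, mul_nonneg (hα0 i) hφ0.le]
    · nlinarith [hα0 i, hα1 i]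
  have hDrepos : 0 < D.re := by
    rw [hDre]
    exact Finset.sum_pos (fun i _ =>
      mul_pos (mul_pos (ha i) (Real.rpow_pos_of_pos hr _)) (hcos i)) Finset.univ_nonempty
  have hDne : D ≠ 0 := fun h => by rw [h] at hDrepos; simp at hDrepos
  have hnormSq : 0 < Complex.normSq D := Complex.normSq_pos.mpr hDne
  -- cross term
  have hsin : ∀ i j, 0 < Real.sin (β j * φ - α i * φ) := by
    intro i j
    apply Real.sin_pos_of_pos_of_lt_pi
    · nlinarith [hαβ' i j]
    · nlinarith [hαβ' i j, hβ' j, hα0 i]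
  have key : 0 < N.im * D.re - N.re * D.im := by
    rw [hNim, hNre, hDre, hDim, Finset.sum_mul_sum, Finset.sum_mul_sum,
      ← Finset.sum_sub_distrib]
    apply Finset.sum_pos _ Finset.univ_nonempty
    intro j _
    rw [← Finset.sum_sub_distrib]
    apply Finset.sum_pos _ Finset.univ_nonempty
    intro i _
    have heq : b j * r ^ β j * Real.sin (β j * φ) * (a i * r ^ α i * Real.cos (α i * φ)) -
        b j * r ^ β j * Real.cos (β j * φ) * (a i * r ^ α i * Real.sin (α i * φ)) =
        a i * b j * (r ^ α i * r ^ β j) * Real.sin (β j * φ - α i * φ) := by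
      rw [Real.sin_sub]; ring
    rw [heq]
    have := hsin i j
    have := ha i
    have := hb j
    have : (0:ℝ) < r ^ α i := Real.rpow_pos_of_pos hr _
    have : (0:ℝ) < r ^ β j := Real.rpow_pos_of_pos hr _
    positivity
  have hdivim : 0 < (N / D).im := by
    rw [Complex.div_im]
    have : N.im * D.re / Complex.normSq D - N.re * D.im / Complex.normSq D =
        (N.im * D.re - N.re * D.im) / Complex.normSq D := by ring
    rw [this]
    exact div_pos key hnormSq
  -- Im (s^2) > 0
  have hs2im : (s ^ 2).im = r ^ 2 * Real.sin (2 * φ) := by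
    rw [hs, mul_pow, sq (Complex.exp _), ← Complex.exp_add,
      show Complex.I * (φ:ℂ) + Complex.I * (φ:ℂ) = ((2 * φ : ℝ) : ℂ) * Complex.I by
        push_cast; ring,
      Complex.exp_mul_I,
      show ((r:ℂ) ^ 2 * (Complex.cos ((2 * φ : ℝ):ℂ) + Complex.sin ((2 * φ : ℝ):ℂ) * Complex.I))
          = ((r ^ 2 * Real.cos (2 * φ) : ℝ) : ℂ) + ((r ^ 2 * Real.sin (2 * φ) : ℝ) : ℂ) * Complex.I by
        rw [← Complex.ofReal_cos, ← Complex.ofReal_sin]; push_cast; ring]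
    simp only [Complex.add_im, Complex.ofReal_im, Complex.mul_im, Complex.I_im,
      Complex.ofReal_re, Complex.I_re]
    ring
  have hs2pos : 0 < (s ^ 2).im := by
    rw [hs2im]
    have : 0 < Real.sin (2 * φ) := Real.sin_pos_of_pos_of_lt_pi (by linarith) (by linarith)
    positivity
  -- total
  have hξ2 : (0:ℝ) < ξ ^ 2 := by positivity
  have him : 0 < (s ^ 2 + (ξ ^ 2 : ℂ) * N / D).im := by
    have hrw : (ξ ^ 2 : ℂ) * N / D = ((ξ ^ 2 : ℝ) : ℂ) * (N / D) := by
      push_cast; ring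
    rw [Complex.add_im, hrw, Complex.im_ofReal_mul]
    have := mul_pos hξ2 hdivim
    linarith
  exact ⟨him, fun h => by rw [h] at him; simp at him⟩
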